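/- If a Gauss diagram G₁ is obtained from G₂ by deleting any finite set of chords, then the number of bridges of G₁ is at most the number of bridges of G₂. -/

import Mathlib

/-- A Gauss diagram, recorded as the cyclic word of its chord endpoints: each endpoint is
a pair `(c, b)` where `c` is the chord label and `b = true` for the arrow head,
`b = false` for the arrow tail.  Each chord occurring in the diagram contributes exactly
one head and one tail. -/
structure GaussDiagram where
  word : List (ℕ × Bool)
  once : ∀ c b, word.count (c, b) ≤ 1
  paired : ∀ c, (c, true) ∈ word ↔ (c, false) ∈ word

/-- The number of bridges of a Gauss diagram: the number of arcs of the circle between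
two (cyclically) consecutive arrow heads containing at least one arrow tail.  Since the
endpoints strictly between consecutive heads are all tails, such arcs correspond exactly
to cyclically adjacent pairs (tail, head). -/
def bridges (w : List (ℕ × Bool)) : ℕ :=
  ((w.zip (w.rotate 1)).filter (fun p => !p.1.2 && p.2.2)).length

/-- `G₁` is obtained from `G₂` by deleting the chord `c` (removing its head and its tail
from the circle). -/
def IsChordDeletion (G₁ G₂ : GaussDiagram) (c : ℕ) : Prop :=
  (c, true) ∈ G₂.word ∧ G₁.word = G₂.word.filter (fun p => p.1 != c)

/-- `G₁` is obtained from `G₂` by deleting the (finite) set `S` of chords. -/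
def IsChordsDeletion (G₁ G₂ : GaussDiagram) (S : Finset ℕ) : Prop :=
  G₁.word = G₂.word.filter (fun p => decide (p.1 ∉ S))


/-- Linear count of (tail, head)-adjacent pairs. -/
def linTH : List (ℕ × Bool) → ℕ
  | x :: y :: t => (if !x.2 && y.2 then 1 else 0) + linTH (y :: t)
  | _ => 0

lemma bridges_rotate (w : List (ℕ × Bool)) (k : ℕ) :
    bridges (w.rotate k) = bridges w := by
  unfold bridges
  have h1 : (w.rotate k).rotate 1 = (w.rotate 1).rotate k := by
    rw [List.rotate_rotate, List.rotate_rotate, Nat.add_comm]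
  rw [h1]
  have h2 : (w.rotate k).zip ((w.rotate 1).rotate k) = (w.zip (w.rotate 1)).rotate k := by
    simpa [List.zip] using
      (List.zipWith_rotate_distrib Prod.mk w (w.rotate 1) k (by simp)).symm
  rw [h2]
  exact (((w.zip (w.rotate 1)).rotate_perm k).filter _).length_eq

lemma bridges_cons_eq_linTH (x : ℕ × Bool) (t : List (ℕ × Bool)) :
    bridges (x :: t) = linTH (x :: (t ++ [x])) := by
  unfold bridges
  rw [List.rotate_cons_succ, List.rotate_zero]
  suffices h : ∀ (t : List (ℕ × Bool)) (x y : ℕ × Bool),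
      (((x :: t).zip (t ++ [y])).filter (fun p => !p.1.2 && p.2.2)).length
        = linTH (x :: (t ++ [y])) by
    exact h t x x
  intro t
  induction t with
  | nil => intro x y; simp [linTH]; split <;> simp_all [linTH]
  | cons z t ih =>
    intro x y
    simp only [List.cons_append, List.zip_cons_cons, List.filter_cons]
    have h2 : linTH (x :: z :: (t ++ [y])) = (if !x.2 && z.2 then 1 else 0)
        + linTH (z :: (t ++ [y])) := rfl
    rw [h2, ← ih z y]
    split <;> simp <;> omega

lemma step_le (a x y : ℕ × Bool) (r : List (ℕ × Bool)) :
    linTH (a :: y :: r) ≤ linTH (a :: x :: y :: r) := by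
  show (if !a.2 && y.2 then 1 else 0) + linTH (y :: r)
    ≤ (if !a.2 && x.2 then 1 else 0) + ((if !x.2 && y.2 then 1 else 0) + linTH (y :: r))
  cases a.2 <;> cases x.2 <;> cases y.2 <;> simp

lemma linTH_mono {w₁ w₂ : List (ℕ × Bool)} (h : List.Sublist w₁ w₂) :
    ∀ a b, linTH (a :: (w₁ ++ [b])) ≤ linTH (a :: (w₂ ++ [b])) := by
  induction h with
  | slnil => intro a b; exact le_rfl
  | @cons l₁ l₂ x h ih =>
    intro a b
    refine (ih a b).trans ?_
    obtain ⟨y, r, hc⟩ := List.exists_cons_of_ne_nil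
      (List.append_ne_nil_of_right_ne_nil l₂ (by simp) : l₂ ++ [b] ≠ [])
    calc linTH (a :: (l₂ ++ [b])) = linTH (a :: y :: r) := by rw [hc]
      _ ≤ linTH (a :: x :: y :: r) := step_le a x y r
      _ = linTH (a :: (x :: l₂ ++ [b])) := by rw [List.cons_append, hc]
  | @cons_cons l₁ l₂ x h ih =>
    intro a b
    obtain ⟨y, r, hc⟩ := List.exists_cons_of_ne_nil
      (List.append_ne_nil_of_right_ne_nil l₁ (by simp) : l₁ ++ [b] ≠ [])
    obtain ⟨z, s, hc'⟩ := List.exists_cons_of_ne_nil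
      (List.append_ne_nil_of_right_ne_nil l₂ (by simp) : l₂ ++ [b] ≠ [])
    have h3 := ih x b
    rw [hc, hc'] at h3
    calc linTH (a :: (x :: l₁ ++ [b]))
        = (if !a.2 && x.2 then 1 else 0) + linTH (x :: y :: r) := by
          rw [List.cons_append, hc]; rfl
      _ ≤ (if !a.2 && x.2 then 1 else 0) + linTH (x :: z :: s) := Nat.add_le_add_left h3 _
      _ = linTH (a :: (x :: l₂ ++ [b])) := by rw [List.cons_append, hc']; rfl

lemma exists_decomp {l₂ : List (ℕ × Bool)} {a : ℕ × Bool} {t : List (ℕ × Bool)}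
    (h : List.Sublist (a :: t) l₂) : ∃ u v, l₂ = u ++ a :: v ∧ List.Sublist t v := by
  induction l₂ with
  | nil => simp at h
  | cons x l ih =>
    rcases h with _ | _ | _
    case cons h' =>
      obtain ⟨u, v, rfl, hs⟩ := ih h'
      exact ⟨x :: u, v, rfl, hs⟩
    case cons_cons h' =>
      exact ⟨[], l, rfl, h'⟩

lemma bridges_mono {l₁ l₂ : List (ℕ × Bool)} (h : List.Sublist l₁ l₂) :
    bridges l₁ ≤ bridges l₂ := by
  rcases l₁ with _ | ⟨a, t⟩
  · simp [bridges]
  obtain ⟨u, v, rfl, ht⟩ := exists_decomp h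
  have hrot : bridges (u ++ a :: v) = bridges (a :: (v ++ u)) := by
    rw [← bridges_rotate (u ++ a :: v) u.length, List.rotate_append_length_eq]
    simp
  rw [hrot, bridges_cons_eq_linTH, bridges_cons_eq_linTH]
  exact linTH_mono (ht.trans (v.sublist_append_left u)) a a

theorem bridges_le_of_chordsDeletion (G₁ G₂ : GaussDiagram) (S : Finset ℕ)
    (h : IsChordsDeletion G₁ G₂ S) :
    bridges G₁.word ≤ bridges G₂.word := by
  rw [h]
  exact bridges_mono (List.filter_sublist (l := G₂.word))
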